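/- Let A be an m×N matrix with rational entries, let C = {x ∈ ℝ^N : x_i ≥ 0 for all i and Ax = 0}, and let f : ℝ^N → ℝ be a linear functional. Suppose v ∈ C satisfies f(v) > 0, and that there is no integer vector w ∈ C ∩ ℤ^N with f(w) > 0 whose support is strictly contained in the support of v. Then v lies on an extreme ray of C; that is, whenever v = a + b with a, b ∈ C, both a and b are nonnegative real scalar multiples of v. -/

import Mathlib

lemma int_of_den_dvd (q : ℚ) (n : ℕ) (h : q.den ∣ n) : ∃ z : ℤ, (n : ℚ) * q = z := by
  obtain ⟨k, hk⟩ := h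
  refine ⟨k * q.num, ?_⟩
  rw [hk]
  push_cast
  rw [mul_comm ((q.den : ℚ)) (k : ℚ), mul_assoc, Rat.den_mul_eq_num]

lemma stepA {m N : ℕ} (A : Matrix (Fin m) (Fin N) ℚ) (f : (Fin N → ℝ) →ₗ[ℝ] ℝ)
    (x : Fin N → ℝ) (hx0 : ∀ i, 0 ≤ x i) (hxA : (A.map ((↑) : ℚ → ℝ)).mulVec x = 0)
    (hfx : 0 < f x) :
    ∃ w : Fin N → ℝ, (∀ i, 0 ≤ w i) ∧ (A.map ((↑) : ℚ → ℝ)).mulVec w = 0 ∧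
      (∀ i, ∃ z : ℤ, w i = (z : ℝ)) ∧ 0 < f w ∧ ∀ i, w i ≠ 0 → x i ≠ 0 := by
  classical
  set V : Submodule ℚ ℝ := Submodule.span ℚ (Set.range x) with hV
  have : FiniteDimensional ℚ V := FiniteDimensional.span_of_finite ℚ (Set.finite_range x)
  set d := Module.finrank ℚ V with hd
  set b : Module.Basis (Fin d) ℚ V := Module.finBasis ℚ V with hb
  have hxV : ∀ i, x i ∈ V := fun i => Submodule.subset_span ⟨i, rfl⟩
  set Q : Matrix (Fin N) (Fin d) ℚ := Matrix.of (fun i l => b.repr ⟨x i, hxV i⟩ l) with hQ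
  set c : Fin d → ℝ := fun l => ((b l : V) : ℝ) with hc
  -- x i = ∑ l, Q i l * c l
  have hxsum : ∀ i, x i = ∑ l, (Q i l : ℝ) * c l := by
    intro i
    have := b.sum_repr ⟨x i, hxV i⟩
    have := congrArg (Subtype.val : V → ℝ) this
    simp only [AddSubmonoidClass.coe_finset_sum] at this
    rw [← this]
    refine Finset.sum_congr rfl fun l _ => ?_
    simp [Q, c, Rat.smul_def]
  have hLI : LinearIndependent ℚ c := by
    have := b.linearIndependent
    exact this.map' V.subtype (Submodule.ker_subtype V)
  -- A * Q = 0
  have hAQ : A * Q = 0 := by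
    ext r l
    have hr : ∑ i, ((A r i : ℝ)) * x i = 0 := by
      have := congrFun hxA r
      simpa [Matrix.mulVec, dotProduct, Matrix.map_apply] using this
    have hsum : ∑ l, ((∑ i, A r i * Q i l : ℚ)) • c l = 0 := by
      have : ∑ i, (A r i : ℝ) * x i = ∑ l, ((∑ i, A r i * Q i l : ℚ)) • c l := by
        simp_rw [hxsum, Finset.mul_sum]
        rw [Finset.sum_comm]
        refine Finset.sum_congr rfl fun l _ => ?_
        rw [Rat.smul_def]
        push_cast
        rw [Finset.sum_mul]
        ring_nf
        exact Finset.sum_congr rfl fun _ _ => by ring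
      rw [← this, hr]
    have := (Fintype.linearIndependent_iff.mp hLI) _ hsum l
    simpa [Matrix.mul_apply] using this
  -- support: Q i l = 0 when x i = 0
  have hQ0 : ∀ i, x i = 0 → ∀ l, Q i l = 0 := by
    intro i hi l
    have : (⟨x i, hxV i⟩ : V) = 0 := by ext; simp [hi]
    simp [Q, this]
  -- the linear map Φ
  set Qr : Matrix (Fin N) (Fin d) ℝ := Q.map ((↑) : ℚ → ℝ) with hQr
  set Φ : (Fin d → ℝ) →ₗ[ℝ] (Fin N → ℝ) := Qr.mulVecLin with hΦ
  have hΦx : Φ c = x := by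
    funext i
    simp only [Φ, Matrix.mulVecLin_apply, Matrix.mulVec, dotProduct]
    rw [hxsum i]
    refine Finset.sum_congr rfl fun l _ => by simp [Qr]
  have hΦker : ∀ t, (A.map ((↑) : ℚ → ℝ)).mulVec (Φ t) = 0 := by
    intro t
    have : (A.map ((↑) : ℚ → ℝ)) * Qr = 0 := by
      have h2 : (A * Q).map ((↑) : ℚ → ℝ) = (A.map ((↑) : ℚ → ℝ)) * Q.map ((↑) : ℚ → ℝ) :=
        Matrix.map_mul (f := Rat.castHom ℝ)
      rw [show Qr = Q.map ((↑) : ℚ → ℝ) from rfl, ← h2, hAQ]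
      ext r l; simp
    simp only [Φ, Matrix.mulVecLin_apply, Matrix.mulVec_mulVec, this, Matrix.zero_mulVec]
  -- open set U
  have hΦcont : Continuous Φ := Φ.continuous_of_finiteDimensional
  set U : Set (Fin d → ℝ) :=
    {t | 0 < f (Φ t)} ∩ ⋂ (i : Fin N) (_ : x i ≠ 0), {t | 0 < Φ t i} with hU
  have hUopen : IsOpen U := by
    refine IsOpen.inter (isOpen_lt continuous_const (f.continuous_of_finiteDimensional.comp hΦcont)) ?_
    refine isOpen_iInter_of_finite fun i => isOpen_iInter_of_finite fun _ => ?_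
    exact isOpen_lt continuous_const ((continuous_apply i).comp hΦcont)
  have hcU : c ∈ U := by
    constructor
    · simp [hΦx, hfx]
    · simp only [Set.mem_iInter, Set.mem_setOf_eq]
      intro i hi
      rw [hΦx]
      exact lt_of_le_of_ne (hx0 i) (Ne.symm hi)
  -- rational approximation
  obtain ⟨ε, hε, hball⟩ := Metric.isOpen_iff.mp hUopen c hcU
  have hq' : ∃ q' : Fin d → ℚ, (fun l => (q' l : ℝ)) ∈ U := by
    choose q' hq' using fun l => exists_rat_near (c l) hε
    refine ⟨q', hball ?_⟩
    rw [Metric.mem_ball, dist_pi_lt_iff hε]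
    intro l
    rw [Real.dist_eq, abs_sub_comm]
    exact hq' l
  obtain ⟨q', hq'U⟩ := hq'
  set wq : Fin N → ℚ := Q.mulVec q' with hwq
  have hcastwq : (fun i => (wq i : ℝ)) = Φ (fun l => (q' l : ℝ)) := by
    funext i
    have := RingHom.map_mulVec (Rat.castHom ℝ) Q q' i
    simpa [Φ, Qr, Function.comp_def] using this
  have hwqA : A.mulVec wq = 0 := by
    rw [hwq, Matrix.mulVec_mulVec, hAQ, Matrix.zero_mulVec]
  have hwq0 : ∀ i, x i = 0 → wq i = 0 := by
    intro i hi
    simp [wq, Matrix.mulVec, dotProduct, fun l => hQ0 i hi l]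
  have hwqpos : ∀ i, x i ≠ 0 → 0 < wq i := by
    intro i hi
    have := hq'U.2
    simp only [Set.mem_iInter, Set.mem_setOf_eq] at this
    have h2 := this i hi
    rw [← hcastwq] at h2
    have h3 : (0:ℝ) < (wq i : ℝ) := h2
    exact_mod_cast h3
  have hwqf : 0 < f (fun i => (wq i : ℝ)) := by rw [hcastwq]; exact hq'U.1
  -- clear denominators
  set n : ℕ := ∏ i, (wq i).den with hn
  have hnpos : 0 < n := Finset.prod_pos fun i _ => (wq i).pos
  refine ⟨fun i => (((n : ℚ) * wq i : ℚ) : ℝ), ?_, ?_, ?_, ?_, ?_⟩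
  · intro i
    by_cases hi : x i = 0
    · simp [hwq0 i hi]
    · have := hwqpos i hi
      positivity
  · have h1 : A.mulVec (fun i => (n : ℚ) * wq i) = 0 := by
      have h0 : (fun i => (n : ℚ) * wq i) = (n : ℚ) • wq := by
        funext i; simp [Pi.smul_apply, smul_eq_mul]
      rw [h0, Matrix.mulVec_smul, hwqA, smul_zero]
    funext r
    have h2 := (RingHom.map_mulVec (Rat.castHom ℝ) A (fun i => (n:ℚ) * wq i) r).symm
    simpa [h1, Function.comp_def] using h2
  · intro i
    obtain ⟨z, hz⟩ := int_of_den_dvd (wq i) n (Finset.dvd_prod_of_mem _ (Finset.mem_univ i))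
    refine ⟨z, ?_⟩
    show (((n : ℚ) * wq i : ℚ) : ℝ) = (z : ℝ)
    rw [hz]
    norm_cast
  · have : (fun i => (((n : ℚ) * wq i : ℚ) : ℝ)) = (n : ℝ) • (fun i => (wq i : ℝ)) := by
      funext i; push_cast; simp [Pi.smul_apply, smul_eq_mul]
    rw [this, map_smul, smul_eq_mul]
    have : (0:ℝ) < n := by exact_mod_cast hnpos
    exact mul_pos this hwqf
  · intro i hi
    by_contra hxi
    apply hi
    simp [hwq0 i hxi]

/-- If `v` lies in the cone `C = {x : x ≥ 0, Ax = 0}`, has `f v > 0`,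
and no integer vector `w ∈ C` with `f w > 0` has support strictly contained in the
support of `v`, then `v` lies on an extreme ray of `C`. -/
theorem stmt_0 {m N : ℕ} (A : Matrix (Fin m) (Fin N) ℚ)
    (C : Set (Fin N → ℝ))
    (hC : C = {x | (∀ i, 0 ≤ x i) ∧ (A.map ((↑) : ℚ → ℝ)).mulVec x = 0})
    (f : (Fin N → ℝ) →ₗ[ℝ] ℝ)
    (v : Fin N → ℝ) (hv : v ∈ C) (hfv : 0 < f v)
    (hmin : ¬ ∃ w : Fin N → ℝ, w ∈ C ∧ (∀ i, ∃ z : ℤ, w i = (z : ℝ)) ∧ 0 < f w ∧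
      {i | w i ≠ 0} ⊂ {i | v i ≠ 0}) :
    ∀ a b : Fin N → ℝ, a ∈ C → b ∈ C → v = a + b →
      (∃ μ : ℝ, 0 ≤ μ ∧ a = μ • v) ∧ (∃ ν : ℝ, 0 ≤ ν ∧ b = ν • v) := by
  classical
  subst hC
  obtain ⟨hv0, hvA⟩ := hv
  -- no nonzero element of the cone has support strictly inside that of v
  have key : ∀ x : Fin N → ℝ, (∀ i, 0 ≤ x i) → (A.map ((↑) : ℚ → ℝ)).mulVec x = 0 →
      x ≠ 0 → {i | x i ≠ 0} ⊆ {i | v i ≠ 0} → {i | x i ≠ 0} = {i | v i ≠ 0} := by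
    intro x hx0 hxA hxne hsub
    by_contra hne
    have hss : {i | x i ≠ 0} ⊂ {i | v i ≠ 0} := ⟨hsub, fun h => hne (le_antisymm hsub h)⟩
    rcases lt_or_ge 0 (f x) with hfx | hfx
    · obtain ⟨w, hw0, hwA, hwint, hwf, hwsupp⟩ := stepA A f x hx0 hxA hfx
      exact hmin ⟨w, ⟨hw0, hwA⟩, hwint, hwf,
        Set.ssubset_of_subset_of_ssubset (fun i hi => hwsupp i hi) hss⟩
    · obtain ⟨i1, hi1⟩ : ∃ i, x i ≠ 0 := by
        by_contra h; push_neg at h; exact hxne (funext h)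
      set T : Finset (Fin N) := Finset.univ.filter (fun i => x i ≠ 0) with hT
      have hTne : T.Nonempty := ⟨i1, by simp [hT, hi1]⟩
      have hmemT : ∀ i, i ∈ T ↔ x i ≠ 0 := fun i => by simp [hT]
      have hxpos : ∀ i ∈ T, 0 < x i := fun i hiT =>
        lt_of_le_of_ne (hx0 i) (Ne.symm ((hmemT i).mp hiT))
      set t := T.inf' hTne (fun i => v i / x i) with ht
      obtain ⟨i0, hi0T, hi0⟩ := Finset.exists_mem_eq_inf' hTne (fun i => v i / x i)
      have hvposT : ∀ i ∈ T, 0 < v i := by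
        intro i hiT
        exact lt_of_le_of_ne (hv0 i) (Ne.symm (hsub ((hmemT i).mp hiT)))
      set y : Fin N → ℝ := v - t • x with hy
      have hxz : ∀ i, i ∉ T → x i = 0 := by
        intro i hiT
        by_contra h
        exact hiT ((hmemT i).mpr h)
      have hy0 : ∀ i, 0 ≤ y i := by
        intro i
        by_cases hiT : i ∈ T
        · have h1 : t ≤ v i / x i := Finset.inf'_le _ hiT
          have h2 : t * x i ≤ v i := (le_div_iff₀ (hxpos i hiT)).mp h1
          simp only [hy, Pi.sub_apply, Pi.smul_apply, smul_eq_mul]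
          linarith
        · simp [hy, hxz i hiT, hv0 i]
      have hyA : (A.map ((↑) : ℚ → ℝ)).mulVec y = 0 := by
        rw [hy, Matrix.mulVec_sub, Matrix.mulVec_smul, hvA, hxA, smul_zero, sub_zero]
      have hyf : 0 < f y := by
        have h1 : f y = f v - t * f x := by rw [hy, map_sub, map_smul, smul_eq_mul]
        have htpos : 0 < t := by
          rw [ht, Finset.lt_inf'_iff]
          exact fun i hiT => div_pos (hvposT i hiT) (hxpos i hiT)
        nlinarith
      have hyz : ∀ i, v i = 0 → y i = 0 := by
        intro i hvi
        have hxi : x i = 0 := by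
          by_contra h
          exact hsub h hvi
        simp [hy, hvi, hxi]
      have hysupp : {i | y i ≠ 0} ⊆ {i | v i ≠ 0} := by
        intro i hi
        by_contra h
        simp only [Set.mem_setOf_eq, not_not] at h
        exact hi (hyz i h)
      have hyi0 : y i0 = 0 := by
        have hx0i : x i0 ≠ 0 := (hmemT i0).mp hi0T
        simp only [hy, Pi.sub_apply, Pi.smul_apply, smul_eq_mul, ht, hi0]
        field_simp
        ring
      have hyss : {i | y i ≠ 0} ⊂ {i | v i ≠ 0} := by
        refine ⟨hysupp, fun h => ?_⟩
        have : v i0 ≠ 0 := (hvposT i0 hi0T).ne'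
        exact (h this) hyi0
      obtain ⟨w, hw0, hwA, hwint, hwf, hwsupp⟩ := stepA A f y hy0 hyA hyf
      exact hmin ⟨w, ⟨hw0, hwA⟩, hwint, hwf,
        Set.ssubset_of_subset_of_ssubset (fun i hi => hwsupp i hi) hyss⟩
  intro a b ha hb hab
  obtain ⟨ha0, haA⟩ := ha
  obtain ⟨hb0, hbA⟩ := hb
  have hale : ∀ i, a i ≤ v i := by
    intro i
    have h1 := hb0 i
    have h2 : v i = a i + b i := by rw [hab]; rfl
    linarith
  by_cases haz : a = 0
  · refine ⟨⟨0, le_refl 0, by simp [haz]⟩, ⟨1, zero_le_one, ?_⟩⟩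
    rw [hab, haz, one_smul, zero_add]
  by_cases hbz : b = 0
  · refine ⟨⟨1, zero_le_one, ?_⟩, ⟨0, le_refl 0, by simp [hbz]⟩⟩
    rw [hab, hbz, one_smul, add_zero]
  have hasub : {i | a i ≠ 0} ⊆ {i | v i ≠ 0} := by
    intro i hi
    simp only [Set.mem_setOf_eq] at *
    intro hvi
    have h2 : v i = a i + b i := by rw [hab]; rfl
    have := ha0 i; have := hb0 i
    exact hi (by linarith)
  have haeq := key a ha0 haA haz hasub
  set S : Finset (Fin N) := Finset.univ.filter (fun i => v i ≠ 0) with hS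
  have hmemS : ∀ i, i ∈ S ↔ v i ≠ 0 := fun i => by simp [hS]
  have hSne : S.Nonempty := by
    have hvne : v ≠ 0 := by
      intro h
      rw [h, map_zero] at hfv
      exact lt_irrefl 0 hfv
    obtain ⟨i, hi⟩ : ∃ i, v i ≠ 0 := by
      by_contra h; push_neg at h; exact hvne (funext h)
    exact ⟨i, (hmemS i).mpr hi⟩
  have hapos : ∀ i ∈ S, 0 < a i := by
    intro i hiS
    have : a i ≠ 0 := by
      have : i ∈ {i | a i ≠ 0} := haeq ▸ ((hmemS i).mp hiS)
      exact this
    exact lt_of_le_of_ne (ha0 i) (Ne.symm this)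
  set t := S.inf' hSne (fun i => v i / a i) with ht
  obtain ⟨i0, hi0S, hi0⟩ := Finset.exists_mem_eq_inf' hSne (fun i => v i / a i)
  have ht1 : 1 ≤ t := by
    rw [ht, Finset.le_inf'_iff]
    exact fun i hiS => (one_le_div (hapos i hiS)).mpr (hale i)
  have htpos : 0 < t := lt_of_lt_of_le one_pos ht1
  set c : Fin N → ℝ := v - t • a with hc
  have hvz : ∀ i, i ∉ S → v i = 0 := by
    intro i hiS
    by_contra h
    exact hiS ((hmemS i).mpr h)
  have haz' : ∀ i, v i = 0 → a i = 0 := by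
    intro i hvi
    have := hale i
    have := ha0 i
    linarith
  have hc0 : ∀ i, 0 ≤ c i := by
    intro i
    by_cases hiS : i ∈ S
    · have h1 : t ≤ v i / a i := Finset.inf'_le _ hiS
      have h2 : t * a i ≤ v i := (le_div_iff₀ (hapos i hiS)).mp h1
      simp only [hc, Pi.sub_apply, Pi.smul_apply, smul_eq_mul]
      linarith
    · simp [hc, hvz i hiS, haz' i (hvz i hiS)]
  have hcA : (A.map ((↑) : ℚ → ℝ)).mulVec c = 0 := by
    rw [hc, Matrix.mulVec_sub, Matrix.mulVec_smul, hvA, haA, smul_zero, sub_zero]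
  have hci0 : c i0 = 0 := by
    have ha0i : a i0 ≠ 0 := (hapos i0 hi0S).ne'
    simp only [hc, Pi.sub_apply, Pi.smul_apply, smul_eq_mul, ht, hi0]
    field_simp
    ring
  have hcsub : {i | c i ≠ 0} ⊆ {i | v i ≠ 0} := by
    intro i hi
    by_contra h
    simp only [Set.mem_setOf_eq, not_not] at h
    exact hi (by simp [hc, h, haz' i h])
  have hcz : c = 0 := by
    by_contra hcne
    have hceq := key c hc0 hcA hcne hcsub
    have h1 : i0 ∈ {i | v i ≠ 0} := (hmemS i0).mp hi0S
    rw [← hceq] at h1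
    exact h1 hci0
  have hva : v = t • a := by
    have : v - t • a = 0 := hcz
    have := sub_eq_zero.mp this
    exact this
  refine ⟨⟨t⁻¹, (inv_pos.mpr htpos).le, ?_⟩, ⟨1 - t⁻¹, ?_, ?_⟩⟩
  · rw [hva, smul_smul, inv_mul_cancel₀ htpos.ne', one_smul]
  · have h1 : t⁻¹ ≤ 1 := by
      rw [inv_le_one_iff₀]
      right; exact ht1
    linarith
  · have hax : a = t⁻¹ • v := by
      rw [hva, smul_smul, inv_mul_cancel₀ htpos.ne', one_smul]
    have : b = v - a := by rw [hab]; funext i; simp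
    rw [this, hax]
    funext i
    simp only [Pi.sub_apply, Pi.smul_apply, smul_eq_mul]
    ring
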